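/- Let G ⊆ R⟨X⟩ be a set of polynomials and DM a function selecting divisor monomials (DM(g) ⊆ supp(g) for each g ∈ G). Let f ∈ R⟨X⟩ be a polynomial such that f →*_{G,DM} 0. Then, for every labelled quiver Q with labels in X such that DM is compatible with Q, the polynomial f is compatible with Q if and only if f is a Q-consequence of G. -/

import Mathlib

open scoped BigOperators

universe u₁ u₂ u₃ u₄ u₅

/-- A labelled quiver: a directed multigraph with edges labelled in `X`. -/
structure LQuiver (V : Type u₁) (E : Type u₂) (X : Type u₃) where
  src : E → V
  tgt : E → V
  lab : E → X

namespace LQuiver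

variable {V : Type u₁} {E : Type u₂} {X : Type u₃}

/-- Paths in the quiver (possibly empty). -/
inductive Walk (Q : LQuiver V E X) : V → V → Type (max u₁ u₂)
  | nil (v : V) : Walk Q v v
  | cons {u : V} (e : E) (p : Walk Q u (Q.src e)) : Walk Q u (Q.tgt e)

/-- The label of a path, a word in the free monoid `⟨X⟩`. -/
def wlabel (Q : LQuiver V E X) : ∀ {u v : V}, Q.Walk u v → FreeMonoid X
  | _, _, .nil _ => 1
  | _, _, .cons e p => FreeMonoid.of (Q.lab e) * Q.wlabel p

/-- The signature `σ(m)` of a monomial (word) `m`. -/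
def sigW (Q : LQuiver V E X) (m : FreeMonoid X) : Set (V × V) :=
  {p : V × V | ∃ w : Q.Walk p.1 p.2, Q.wlabel w = m}

variable {R : Type u₄} [CommRing R]

/-- The signature `σ(f)` of a noncommutative polynomial `f ∈ R⟨X⟩`. -/
def sig (Q : LQuiver V E X) (f : MonoidAlgebra R (FreeMonoid X)) : Set (V × V) :=
  ⋂ m ∈ f.coeff.support, Q.sigW m

/-- A polynomial is compatible with `Q` if its signature is nonempty. -/
def Compatible (Q : LQuiver V E X) (f : MonoidAlgebra R (FreeMonoid X)) : Prop :=
  (Q.sig f).Nonempty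

/-- The projection `s(f)` of `σ(f)` on sources. -/
def srcSet (Q : LQuiver V E X) (f : MonoidAlgebra R (FreeMonoid X)) : Set V :=
  Prod.fst '' Q.sig f

/-- The projection `t(f)` of `σ(f)` on targets. -/
def tgtSet (Q : LQuiver V E X) (f : MonoidAlgebra R (FreeMonoid X)) : Set V :=
  Prod.snd '' Q.sig f

/-- `f` is a `Q`-consequence of `F`. -/
def QConsequence (Q : LQuiver V E X) (F : Set (MonoidAlgebra R (FreeMonoid X)))
    (f : MonoidAlgebra R (FreeMonoid X)) : Prop :=
  Q.Compatible f ∧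
  ∃ (n : ℕ) (g a b : Fin n → MonoidAlgebra R (FreeMonoid X)),
    (∀ i, g i ∈ F) ∧
    f = ∑ i, a i * g i * b i ∧
    ∀ uv ∈ Q.sig f, ∀ i, ∃ ui vi : V,
      (uv.1, ui) ∈ Q.sig (b i) ∧ (ui, vi) ∈ Q.sig (g i) ∧ (vi, uv.2) ∈ Q.sig (a i)

end LQuiver

/-- The monomial `m` regarded as a polynomial in `R⟨X⟩`. -/
noncomputable def mono (R : Type u₄) [CommRing R] {X : Type u₃} (m : FreeMonoid X) :
    MonoidAlgebra R (FreeMonoid X) :=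
  MonoidAlgebra.single m 1

/-- One rewriting step with divisor monomials selected by `DM`. -/
def RewriteStep {R : Type u₄} [CommRing R] {X : Type u₃}
    (G : Set (MonoidAlgebra R (FreeMonoid X)))
    (DM : MonoidAlgebra R (FreeMonoid X) → Set (FreeMonoid X))
    (f h : MonoidAlgebra R (FreeMonoid X)) : Prop :=
  ∃ g ∈ G, ∃ m ∈ DM g, ∃ a b : FreeMonoid X, ∃ lam : R,
    a * m * b ∈ f.coeff.support ∧ h = f + lam • (mono R a * g * mono R b)

/-- A monomial order: a well-founded linear order compatible with multiplication. -/
def IsMonomialOrder {X : Type u₃} (ord : LinearOrder (FreeMonoid X)) : Prop :=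
  WellFounded ord.lt ∧
    ∀ a b m m' : FreeMonoid X, ord.le m m' → ord.le (a * m * b) (a * m' * b)

/-- The leading monomial of a polynomial w.r.t. a linear order on monomials
(defined as `1` for the zero polynomial). -/
noncomputable def LM {K : Type u₄} [CommRing K] {X : Type u₃}
    (ord : LinearOrder (FreeMonoid X)) (f : MonoidAlgebra K (FreeMonoid X)) : FreeMonoid X :=
  letI := ord
  letI : Decidable (f = 0) := Classical.dec _
  if h : f = 0 then 1 else f.coeff.support.max'
    (Finsupp.support_nonempty_iff.mpr (fun h0 => h (MonoidAlgebra.coeff_eq_zero.mp h0)))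

/-- One step of standard polynomial reduction w.r.t. a set `G` and a monomial order. -/
def ReduceStep {K : Type u₄} [Field K] {X : Type u₃} (ord : LinearOrder (FreeMonoid X))
    (G : Set (MonoidAlgebra K (FreeMonoid X)))
    (f h : MonoidAlgebra K (FreeMonoid X)) : Prop :=
  ∃ g ∈ G, g ≠ 0 ∧ ∃ a b : FreeMonoid X,
    a * LM ord g * b ∈ f.coeff.support ∧
    h = f - (f.coeff (a * LM ord g * b) / g.coeff (LM ord g)) • (mono K a * g * mono K b)

/-- `f` is `Q`-order compatible w.r.t. the order `ord`. -/
def QOrderCompatible {V : Type u₁} {E : Type u₂} {X : Type u₃} {K : Type u₄} [CommRing K]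
    (Q : LQuiver V E X) (ord : LinearOrder (FreeMonoid X))
    (f : MonoidAlgebra K (FreeMonoid X)) : Prop :=
  Q.Compatible f ∧ Q.sigW (LM ord f) = Q.sig f

/-- A representation of a labelled quiver. -/
structure QRep (R : Type u₄) [CommRing R] {V : Type u₁} {E : Type u₂} {X : Type u₃}
    (Q : LQuiver V E X) where
  M : V → Type u₅
  [addcg : ∀ v, AddCommGroup (M v)]
  [mod : ∀ v, Module R (M v)]
  φ : (e : E) → M (Q.src e) →ₗ[R] M (Q.tgt e)

attribute [instance] QRep.addcg QRep.mod

namespace QRep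

variable {R : Type u₄} [CommRing R] {V : Type u₁} {E : Type u₂} {X : Type u₃}
  {Q : LQuiver V E X}

/-- The linear map induced by a path. -/
def walkMap (ρ : QRep R Q) : ∀ {u v : V}, Q.Walk u v → (ρ.M u →ₗ[R] ρ.M v)
  | _, _, .nil _ => LinearMap.id
  | _, _, .cons e p => (ρ.φ e).comp (ρ.walkMap p)

/-- The representation is consistent with the labelling: two paths with the same
source, target and label induce the same linear map. -/
def Consistent (ρ : QRep R Q) : Prop :=
  ∀ (u v : V) (p q : Q.Walk u v), Q.wlabel p = Q.wlabel q → ρ.walkMap p = ρ.walkMap q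

/-- The realization `φ_{v,w}(f)` of a polynomial `f` (for a consistent representation and
`(v,w) ∈ σ(f)`, this is the well-defined linear map of the paper). -/
noncomputable def real (ρ : QRep R Q) (v w : V) (f : MonoidAlgebra R (FreeMonoid X)) :
    ρ.M v →ₗ[R] ρ.M w :=
  ∑ m ∈ f.coeff.support, f.coeff m •
    (letI : Decidable (∃ p : Q.Walk v w, Q.wlabel p = m) := Classical.dec _
     if h : ∃ p : Q.Walk v w, Q.wlabel p = m then ρ.walkMap h.choose else 0)

end QRep


section Aux

namespace LQuiver

variable {V : Type u₁} {E : Type u₂} {X : Type u₃}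

/-- Composition of walks. -/
def Walk.comp {Q : LQuiver V E X} : ∀ {w v : V}, Q.Walk w v → ∀ {u : V}, Q.Walk u w → Q.Walk u v
  | _, _, .nil _, _, q => q
  | _, _, .cons e p, _, q => .cons e (p.comp q)

lemma wlabel_comp {Q : LQuiver V E X} : ∀ {w v : V} (p : Q.Walk w v) {u : V} (q : Q.Walk u w),
    Q.wlabel (p.comp q) = Q.wlabel p * Q.wlabel q
  | _, _, .nil _, _, q => by simp [Walk.comp, wlabel]
  | _, _, .cons e p, _, q => by
      simp [Walk.comp, wlabel, wlabel_comp p q, mul_assoc]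

lemma wlabel_split {Q : LQuiver V E X} : ∀ {u v : V} (w : Q.Walk u v) (m₁ m₂ : FreeMonoid X),
    Q.wlabel w = m₁ * m₂ →
    ∃ (z : V) (p : Q.Walk u z) (q : Q.Walk z v), Q.wlabel p = m₂ ∧ Q.wlabel q = m₁
  | _, _, .nil v, m₁, m₂, h => by
      have h' : FreeMonoid.toList m₁ ++ FreeMonoid.toList m₂ = [] := by
        have := congrArg FreeMonoid.toList h.symm
        simpa [wlabel] using this
      rw [List.append_eq_nil_iff] at h'
      refine ⟨v, .nil v, .nil v, ?_, ?_⟩ <;> simp only [wlabel]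
      · exact FreeMonoid.toList.injective (by simp [h'.2])
      · exact FreeMonoid.toList.injective (by simp [h'.1])
  | _, _, .cons e p, m₁, m₂, h => by
      rw [wlabel] at h
      cases m₁ using FreeMonoid.casesOn with
      | one =>
        rw [one_mul] at h
        refine ⟨_, .cons e p, .nil _, ?_, ?_⟩ <;> simp only [wlabel]
        exact h
      | of_mul x t =>
        have h' : FreeMonoid.toList (FreeMonoid.of (Q.lab e) * Q.wlabel p)
            = FreeMonoid.toList (FreeMonoid.of x * (t * m₂)) := by rw [h, mul_assoc]
        simp only [FreeMonoid.toList_mul, FreeMonoid.toList_of, List.cons_append,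
          List.nil_append, List.cons.injEq] at h'
        have hp : Q.wlabel p = t * m₂ :=
          FreeMonoid.toList.injective (by simpa [FreeMonoid.toList_mul] using h'.2)
        obtain ⟨z, p', q', hp', hq'⟩ := wlabel_split p t m₂ hp
        refine ⟨z, p', .cons e q', hp', ?_⟩
        rw [wlabel, hq', h'.1]

lemma mem_sigW_mul {Q : LQuiver V E X} {x y : FreeMonoid X} {uv : V × V} :
    uv ∈ Q.sigW (x * y) ↔ ∃ w, (uv.1, w) ∈ Q.sigW y ∧ (w, uv.2) ∈ Q.sigW x := by
  constructor
  · rintro ⟨w, hw⟩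
    obtain ⟨z, p, q, hp, hq⟩ := wlabel_split w x y hw
    exact ⟨z, ⟨p, hp⟩, ⟨q, hq⟩⟩
  · rintro ⟨z, ⟨p, hp⟩, ⟨q, hq⟩⟩
    exact ⟨q.comp p, by rw [wlabel_comp, hp, hq]⟩

variable {R : Type u₄} [CommRing R]

lemma mem_sigW_of_mem_sig {Q : LQuiver V E X} {f : MonoidAlgebra R (FreeMonoid X)}
    {m : FreeMonoid X} (hm : m ∈ f.coeff.support) {uv : V × V} (h : uv ∈ Q.sig f) :
    uv ∈ Q.sigW m := by
  rw [sig, Set.mem_iInter₂] at h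
  exact h m hm

lemma sig_anti {Q : LQuiver V E X} {f h : MonoidAlgebra R (FreeMonoid X)}
    (hs : h.coeff.support ⊆ f.coeff.support) : Q.sig f ⊆ Q.sig h := by
  intro uv huv
  rw [sig, Set.mem_iInter₂]
  exact fun m hm => mem_sigW_of_mem_sig (hs hm) huv

lemma sigW_subset_sig {Q : LQuiver V E X} {f : MonoidAlgebra R (FreeMonoid X)}
    {b : FreeMonoid X} (hs : f.coeff.support ⊆ {b}) : Q.sigW b ⊆ Q.sig f := by
  intro uv huv
  rw [sig, Set.mem_iInter₂]
  intro m hm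
  have : m = b := by simpa using hs hm
  rwa [this]

end LQuiver

variable {X : Type u₃} {R : Type u₄} [CommRing R]

lemma support_mono_mul_mono {a b : FreeMonoid X} {g : MonoidAlgebra R (FreeMonoid X)}
    {x : FreeMonoid X} (hx : x ∈ (mono R a * g * mono R b).coeff.support) :
    ∃ m' ∈ g.coeff.support, x = a * m' * b := by
  classical
  have h1 := MonoidAlgebra.support_coeff_mul_subset (mono R a * g) (mono R b) hx
  rw [Finset.mem_mul] at h1
  obtain ⟨y, hy, c, hc, hyc⟩ := h1
  have h2 := MonoidAlgebra.support_coeff_mul_subset (mono R a) g hy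
  rw [Finset.mem_mul] at h2
  obtain ⟨d, hd, m', hm', hdm⟩ := h2
  have hda : d = a := by
    have := Finsupp.support_single_subset hd
    simpa using this
  have hcb : c = b := by
    have := Finsupp.support_single_subset hc
    simpa using this
  exact ⟨m', hm', by rw [← hyc, ← hdm, hda, hcb]⟩

/-- Key decomposition lemma for rewriting sequences ending at `0`. -/
lemma rewriting_key {V : Type u₁} {E : Type u₂}
    (G : Set (MonoidAlgebra R (FreeMonoid X)))
    (DM : MonoidAlgebra R (FreeMonoid X) → Set (FreeMonoid X))
    (Q : LQuiver V E X)
    (hQ : ∀ g ∈ G, ∀ m ∈ DM g, Q.sigW m = Q.sig g)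
    (f : MonoidAlgebra R (FreeMonoid X))
    (hred : Relation.ReflTransGen (RewriteStep G DM) f 0) :
    ∃ (n : ℕ) (g a b : Fin n → MonoidAlgebra R (FreeMonoid X)),
      (∀ i, g i ∈ G) ∧
      f = ∑ i, a i * g i * b i ∧
      ∀ uv ∈ Q.sig f, ∀ i, ∃ ui vi : V,
        (uv.1, ui) ∈ Q.sig (b i) ∧ (ui, vi) ∈ Q.sig (g i) ∧ (vi, uv.2) ∈ Q.sig (a i) := by
  classical
  induction hred using Relation.ReflTransGen.head_induction_on with
  | refl =>
    exact ⟨0, finZeroElim, finZeroElim, finZeroElim, fun i => i.elim0, by simp,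
      fun uv _ i => i.elim0⟩
  | @head f h hstep _ ih =>
    obtain ⟨g₀, hg₀, m, hm, a, b, lam, hsupp, hh⟩ := hstep
    obtain ⟨n, g, A, B, hgG, hsum, hsig⟩ := ih
    have hσm : Q.sigW m = Q.sig g₀ := hQ g₀ hg₀ m hm
    -- signature of f is contained in sigW (a * m' * b) for every m' in supp g₀
    have hkey : ∀ m' ∈ g₀.coeff.support, Q.sig f ⊆ Q.sigW (a * m' * b) := by
      intro m' hm' uv huv
      have h1 : uv ∈ Q.sigW (a * m * b) := LQuiver.mem_sigW_of_mem_sig hsupp huv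
      rw [LQuiver.mem_sigW_mul] at h1
      obtain ⟨z₁, hz₁, h2⟩ := h1
      rw [LQuiver.mem_sigW_mul] at h2
      obtain ⟨z₂, hz₂, h3⟩ := h2
      have hz₂' : (z₁, z₂) ∈ Q.sigW m' := by
        have : (z₁, z₂) ∈ Q.sig g₀ := hσm ▸ hz₂
        exact LQuiver.mem_sigW_of_mem_sig hm' this
      rw [LQuiver.mem_sigW_mul]
      exact ⟨z₁, hz₁, by rw [LQuiver.mem_sigW_mul]; exact ⟨z₂, hz₂', h3⟩⟩
    have hfh : Q.sig f ⊆ Q.sig h := by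
      intro uv huv
      rw [LQuiver.sig, Set.mem_iInter₂]
      intro x hx
      have hx' : x ∈ f.coeff.support ∪ (lam • (mono R a * g₀ * mono R b)).coeff.support := by
        rw [hh, MonoidAlgebra.coeff_add] at hx
        exact Finsupp.support_add hx
      rcases Finset.mem_union.mp hx' with hx' | hx'
      · exact LQuiver.mem_sigW_of_mem_sig hx' huv
      · obtain ⟨m', hm', rfl⟩ := support_mono_mul_mono (Finsupp.support_smul (by rwa [MonoidAlgebra.coeff_smul] at hx'))
        exact hkey m' hm' huv
    refine ⟨n + 1, Fin.cons g₀ g, Fin.cons ((-lam) • mono R a) A, Fin.cons (mono R b) B,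
      fun i => Fin.cases hg₀ hgG i, ?_, ?_⟩
    · rw [Fin.sum_univ_succ]
      simp only [Fin.cons_zero, Fin.cons_succ]
      rw [← hsum, hh, smul_mul_assoc, smul_mul_assoc, neg_smul]
      abel
    · intro uv huv i
      refine Fin.cases ?_ (fun j => ?_) i
      · simp only [Fin.cons_zero, Fin.cons_succ]
        have h1 : uv ∈ Q.sigW (a * m * b) := LQuiver.mem_sigW_of_mem_sig hsupp huv
        rw [LQuiver.mem_sigW_mul] at h1
        obtain ⟨z₁, hz₁, h2⟩ := h1
        rw [LQuiver.mem_sigW_mul] at h2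
        obtain ⟨z₂, hz₂, h3⟩ := h2
        refine ⟨z₁, z₂, ?_, hσm ▸ hz₂, ?_⟩
        · exact LQuiver.sigW_subset_sig (Finsupp.support_single_subset) hz₁
        · refine LQuiver.sigW_subset_sig ?_ h3
          exact (Finsupp.support_smul).trans Finsupp.support_single_subset
      · simp only [Fin.cons_succ]
        exact hsig uv (hfh huv) j

end Aux

/-- if `f →*_{G,DM} 0` and `DM` is compatible with `Q`, then
`f` is compatible with `Q` iff `f` is a `Q`-consequence of `G`. -/
theorem rewriting_consequences {X R : Type*} [CommRing R]
    (G : Set (MonoidAlgebra R (FreeMonoid X)))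
    (DM : MonoidAlgebra R (FreeMonoid X) → Set (FreeMonoid X))
    (hDM : ∀ g ∈ G, DM g ⊆ (g.coeff.support : Set (FreeMonoid X)))
    (f : MonoidAlgebra R (FreeMonoid X))
    (hred : Relation.ReflTransGen (RewriteStep G DM) f 0) :
    ∀ {V E : Type*} (Q : LQuiver V E X),
      (∀ g ∈ G, ∀ m ∈ DM g, Q.sigW m = Q.sig g) →
      (Q.Compatible f ↔ Q.QConsequence G f) := by
  intro V E Q hQ
  constructor
  · intro hc
    obtain ⟨n, g, a, b, hgG, hsum, hsig⟩ := rewriting_key G DM Q hQ f hred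
    exact ⟨hc, n, g, a, b, hgG, hsum, hsig⟩
  · exact fun hq => hq.1
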